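/- Let h₊ : ℝ → Matrix (Fin n) (Fin n) ℂ be a differentiable, 2π-periodic family of invertible matrices, let C be an invertible n×n complex matrix, and define the particle-hole partner h₋(k) = −C · (h₊(−k))ᵀ · C⁻¹. Then ∫₀^{2π} Tr[h₋(k)⁻¹ · (deriv h₋ k)] dk = −∫₀^{2π} Tr[h₊(k)⁻¹ · (deriv h₊ k)] dk; hence the 1D winding numbers satisfy w₁[h₋] = −w₁[h₊], so the total winding number w₁[h₊] + w₁[h₋] of the block Hamiltonian H = fromBlocks 0 h₊ h₋ 0 vanishes and no skin effect occurs (the situation of 1D class D with commuting sublattice symmetry, D + S₊). -/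

import Mathlib

open Matrix MeasureTheory intervalIntegral

/-- Entrywise derivative of a one-parameter family of matrices. -/
noncomputable def matDeriv {m : Type*} (h : ℝ → Matrix m m ℂ) (k : ℝ) : Matrix m m ℂ :=
  Matrix.of fun i j => deriv (fun t => h t i j) k

/-- The 1D winding number `w₁[h] = (1/(2πi)) ∫₀^{2π} Tr[h(k)⁻¹ · h'(k)] dk` of a family of
invertible matrices, with `h'` the entrywise derivative. -/
noncomputable def w1 {m : Type*} [Fintype m] [DecidableEq m] (h : ℝ → Matrix m m ℂ) : ℂ :=
  (1 / (2 * Real.pi * Complex.I)) *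
    ∫ k in (0 : ℝ)..(2 * Real.pi), ((h k)⁻¹ * matDeriv h k).trace

/-- Entrywise derivative of `k ↦ A * (f k)ᵀ * B` for constant `A`, `B`. -/
lemma matDeriv_conj {n : ℕ} (f : ℝ → Matrix (Fin n) (Fin n) ℂ)
    (hf : ∀ i j, Differentiable ℝ fun k => f k i j)
    (A B : Matrix (Fin n) (Fin n) ℂ) (k : ℝ) :
    matDeriv (fun t => A * (f t)ᵀ * B) k = A * (matDeriv f k)ᵀ * B := by
  ext i j
  have hfun : (fun t => (A * (f t)ᵀ * B) i j)
      = fun t => ∑ x, ∑ y, A i y * f t x y * B x j := by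
    funext t
    simp only [Matrix.mul_apply, Matrix.transpose_apply, Finset.sum_mul]
  have hstep : deriv (fun t => (A * (f t)ᵀ * B) i j) k
      = ∑ x, ∑ y, A i y * deriv (fun t => f t x y) k * B x j := by
    rw [hfun]
    rw [deriv_fun_sum (fun x _ => Differentiable.differentiableAt <| Differentiable.fun_sum
      fun y _ => ((hf x y).const_mul _).mul_const _)]
    refine Finset.sum_congr rfl fun x _ => ?_
    rw [deriv_fun_sum (fun y _ => ((hf x y).const_mul _).mul_const _ |>.differentiableAt)]
    refine Finset.sum_congr rfl fun y _ => ?_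
    rw [deriv_mul_const (((hf x y).const_mul _).differentiableAt),
      deriv_const_mul _ ((hf x y).differentiableAt)]
  show deriv (fun t => (A * (f t)ᵀ * B) i j) k = (A * (matDeriv f k)ᵀ * B) i j
  rw [hstep]
  simp only [Matrix.mul_apply, Matrix.transpose_apply, matDeriv, Matrix.of_apply,
    Finset.sum_mul]

/-- For a differentiable, 2π-periodic family of invertible matrices `h₊`, an
invertible matrix `C`, and the particle-hole partner `h₋(k) = −C · (h₊(−k))ᵀ · C⁻¹`, the trace
integrals are opposite: `∫₀^{2π} Tr[h₋⁻¹ h₋'] = −∫₀^{2π} Tr[h₊⁻¹ h₊']`; hence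
`w₁[h₋] = −w₁[h₊]` and the total winding number `w₁[h₊] + w₁[h₋]` vanishes (1D class D with
commuting sublattice symmetry, D + S₊): no skin effect occurs. -/
theorem winding_number_particle_hole_partner
    {n : ℕ} (hp : ℝ → Matrix (Fin n) (Fin n) ℂ)
    (hdiff : ∀ i j, Differentiable ℝ fun k => hp k i j)
    (hper : ∀ k : ℝ, hp (k + 2 * Real.pi) = hp k)
    (hunit : ∀ k, IsUnit (hp k))
    (C : Matrix (Fin n) (Fin n) ℂ) (hC : IsUnit C)
    (hm : ℝ → Matrix (Fin n) (Fin n) ℂ)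
    (hrel : ∀ k : ℝ, hm k = -(C * (hp (-k))ᵀ * C⁻¹)) :
    (∫ k in (0 : ℝ)..(2 * Real.pi), ((hm k)⁻¹ * matDeriv hm k).trace) =
      -(∫ k in (0 : ℝ)..(2 * Real.pi), ((hp k)⁻¹ * matDeriv hp k).trace) ∧
    w1 hm = -w1 hp ∧ w1 hp + w1 hm = 0 := by
  have hCC : C * C⁻¹ = 1 := Matrix.mul_nonsing_inv C ((Matrix.isUnit_iff_isUnit_det C).mp hC)
  have hCC' : C⁻¹ * C = 1 := Matrix.nonsing_inv_mul C ((Matrix.isUnit_iff_isUnit_det C).mp hC)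
  set g : ℝ → ℂ := fun k => ((hp k)⁻¹ * matDeriv hp k).trace with hg
  -- the negated family
  set f : ℝ → Matrix (Fin n) (Fin n) ℂ := fun t => -(hp (-t)) with hf
  have hfd : ∀ i j, Differentiable ℝ fun t => f t i j := by
    intro i j
    have : (fun t => f t i j) = fun t => -((fun s => hp s i j) (-t)) := rfl
    rw [this]
    exact ((hdiff i j).comp differentiable_neg).neg
  have hmf : ∀ t, hm t = C * (f t)ᵀ * C⁻¹ := by
    intro t
    rw [hrel t]
    simp [hf, Matrix.transpose_neg, Matrix.neg_mul, Matrix.mul_neg]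
  -- derivative of hm
  have hmd : ∀ k, matDeriv hm k = C * (matDeriv f k)ᵀ * C⁻¹ := by
    intro k
    have : hm = fun t => C * (f t)ᵀ * C⁻¹ := funext hmf
    rw [this]
    exact matDeriv_conj f hfd C C⁻¹ k
  -- matDeriv f k = matDeriv hp (-k)
  have hfderiv : ∀ k, matDeriv f k = matDeriv hp (-k) := by
    intro k
    ext i j
    simp only [matDeriv, Matrix.of_apply, hf, Matrix.neg_apply]
    rw [show (fun t => -(hp (-t) i j)) = fun t => -((fun s => hp s i j) (-t)) from rfl]
    rw [deriv.fun_neg, deriv_comp_neg (fun s => hp s i j) k, neg_neg]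
  -- inverse of hm
  have hminv : ∀ k, (hm k)⁻¹ = -(C * ((hp (-k))⁻¹)ᵀ * C⁻¹) := by
    intro k
    have hu := hunit (-k)
    have hAd := (Matrix.isUnit_iff_isUnit_det _).mp hu
    refine Matrix.inv_eq_left_inv ?_
    rw [hrel k]
    have : -(C * ((hp (-k))⁻¹)ᵀ * C⁻¹) * -(C * (hp (-k))ᵀ * C⁻¹)
        = C * (((hp (-k))⁻¹)ᵀ * (C⁻¹ * C) * (hp (-k))ᵀ) * C⁻¹ := by
      simp only [Matrix.neg_mul, Matrix.mul_neg, neg_neg, Matrix.mul_assoc]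
    rw [this, hCC', Matrix.mul_one, ← Matrix.transpose_mul,
      Matrix.mul_nonsing_inv _ hAd, Matrix.transpose_one, Matrix.mul_one, hCC]
  -- pointwise trace identity
  have hpt : ∀ k, ((hm k)⁻¹ * matDeriv hm k).trace = -g (-k) := by
    intro k
    rw [hminv k, hmd k, hfderiv k]
    have : -(C * ((hp (-k))⁻¹)ᵀ * C⁻¹) * (C * (matDeriv hp (-k))ᵀ * C⁻¹)
        = -(C * (((hp (-k))⁻¹)ᵀ * (C⁻¹ * C) * (matDeriv hp (-k))ᵀ * C⁻¹)) := by
      simp only [Matrix.neg_mul, Matrix.mul_assoc]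
    rw [this, hCC', Matrix.mul_one, Matrix.trace_neg, hg, neg_inj]
    rw [Matrix.trace_mul_comm]
    simp only [Matrix.mul_assoc]
    rw [hCC', Matrix.mul_one, ← Matrix.transpose_mul, Matrix.trace_transpose,
      Matrix.trace_mul_comm]
  -- periodicity of g
  have hgper : Function.Periodic g (2 * Real.pi) := by
    intro k
    have hd : matDeriv hp (k + 2 * Real.pi) = matDeriv hp k := by
      ext i j
      simp only [matDeriv, Matrix.of_apply]
      rw [← deriv_comp_add_const (fun t => hp t i j) (2 * Real.pi) k]
      congr 1
      funext t
      simp [hper t]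
    simp [hg, hper k, hd]
  -- the integral identity
  have hint : (∫ k in (0 : ℝ)..(2 * Real.pi), ((hm k)⁻¹ * matDeriv hm k).trace)
      = -(∫ k in (0 : ℝ)..(2 * Real.pi), g k) := by
    have h1 : (∫ k in (0 : ℝ)..(2 * Real.pi), ((hm k)⁻¹ * matDeriv hm k).trace)
        = ∫ k in (0 : ℝ)..(2 * Real.pi), -g (-k) := by
      refine intervalIntegral.integral_congr fun k _ => hpt k
    rw [h1, intervalIntegral.integral_neg, intervalIntegral.integral_comp_neg, neg_zero]
    congr 1
    have := hgper.intervalIntegral_add_eq (-(2 * Real.pi)) 0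
    simpa using this
  refine ⟨hint, ?_, ?_⟩
  · rw [w1, w1, hint, ← hg, mul_neg]
  · rw [w1, w1, hint, ← hg, mul_neg, add_neg_cancel]
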